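/- Let k be a field of characteristic p > 0, let V be a finite-dimensional k-vector space of dimension n, and write n = a·p + b with natural numbers a, b satisfying 0 ≤ b < p. Let u be a unipotent linear automorphism of V with a single Jordan block (i.e. (u − 1)^(n−1) ≠ 0). Then the p-th power u^p has p Jordan blocks, b of size a + 1 and p − b of size a; equivalently, for every natural number j, dim_k ker((u^p − 1)^j) = b·min(j, a+1) + (p − b)·min(j, a) = min(p·j, n). -/

import Mathlib

open Module LinearMap

-- core linear-algebra lemma
theorem aux_dim {k V : Type*} [Field k] [AddCommGroup V] [Module k V] [FiniteDimensional k V]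
    {n : ℕ} (hn : Module.finrank k V = n) (N : Module.End k V) (hnil : IsNilpotent N)
    (hreg : N ^ (n - 1) ≠ 0) :
    ∀ j : ℕ, Module.finrank k (LinearMap.ker (N ^ j)) = min j n := by
  -- n ≥ 1
  rcases Nat.eq_zero_or_pos n with h0 | hn1
  · subst h0
    have : Subsingleton V := by
      rw [← Module.finrank_zero_iff (R := k)]; omega
    exact absurd (Subsingleton.elim _ _) hreg
  -- N ^ n = 0
  have hNn : N ^ n = 0 := by
    have h := hnil.charpoly_eq_X_pow_finrank
    have := N.aeval_self_charpoly
    rw [h, map_pow, Polynomial.aeval_X, hn] at this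
    exact this
  -- strictness of kernels
  have hstrict : ∀ j, j < n → LinearMap.ker (N ^ j) ≠ LinearMap.ker (N ^ (j + 1)) := by
    intro j hj heq
    have htop : LinearMap.ker (N ^ j) = ⊤ := by
      have := Module.End.ker_pow_constant heq (n - j)
      rw [show j + (n - j) = n by omega, hNn] at this
      simpa using this
    have hNj : N ^ j = 0 := LinearMap.ker_eq_top.mp htop
    apply hreg
    calc N ^ (n - 1) = N ^ j * N ^ (n - 1 - j) := by rw [← pow_add]; congr 1; omega
    _ = 0 := by rw [hNj, zero_mul]
  have mono : ∀ j, LinearMap.ker (N ^ j) ≤ LinearMap.ker (N ^ (j + 1)) := by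
    intro j
    rw [pow_succ']
    exact LinearMap.ker_le_ker_comp _ _
  have hlt : ∀ j, j < n → Module.finrank k (LinearMap.ker (N ^ j)) <
      Module.finrank k (LinearMap.ker (N ^ (j + 1))) := by
    intro j hj
    exact Submodule.finrank_lt_finrank_of_lt (lt_of_le_of_ne (mono j) (hstrict j hj))
  -- lower bound
  have hge : ∀ j, j ≤ n → j ≤ Module.finrank k (LinearMap.ker (N ^ j)) := by
    intro j
    induction j with
    | zero => simp
    | succ i ih => intro h; have := hlt i (by omega); have := ih (by omega); omega
  -- upper bound, downward
  have hle : ∀ i, i ≤ n → Module.finrank k (LinearMap.ker (N ^ (n - i))) ≤ n - i := by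
    intro i
    induction i with
    | zero =>
      intro _
      simpa using (Submodule.finrank_le _).trans_eq hn
    | succ i ih =>
      intro h
      have h1 := hlt (n - (i+1)) (by omega)
      rw [show n - (i + 1) + 1 = n - i by omega] at h1
      have := ih (by omega)
      omega
  intro j
  rcases le_or_gt j n with h | h
  · rw [min_eq_left h]
    have := hle (n - j) (by omega)
    rw [show n - (n - j) = j by omega] at this
    exact le_antisymm this (hge j h)
  · rw [min_eq_right h.le]
    have : N ^ j = 0 := by
      calc N ^ j = N ^ n * N ^ (j - n) := by rw [← pow_add]; congr 1; omega
      _ = 0 := by rw [hNn, zero_mul]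
    rw [this]
    rw [LinearMap.ker_zero, finrank_top, hn]


/-- Lemma `lem:power`.  Let `k` be a field of characteristic `p > 0`,
`V` a finite-dimensional `k`-vector space of dimension `n = a * p + b` with `b < p`,
and `u` a unipotent endomorphism of `V` with a single Jordan block
(`(u - 1) ^ (n - 1) ≠ 0`).  Then `u ^ p` has `p` Jordan blocks, `b` of size `a + 1`
and `p - b` of size `a`; equivalently, for every `j`,
`dim ker ((u ^ p - 1) ^ j) = b * min j (a+1) + (p - b) * min j a = min (p * j) n`. -/

theorem stmt0 {k : Type*} [Field k] {p : ℕ} (hp : 0 < p) [CharP k p]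
    {V : Type*} [AddCommGroup V] [Module k V] [FiniteDimensional k V]
    (n a b : ℕ) (hn : Module.finrank k V = n) (hnab : n = a * p + b) (hb : b < p)
    (u : Module.End k V) (hu : IsNilpotent (u - 1))
    (hreg : (u - 1) ^ (n - 1) ≠ 0) :
    ∀ j : ℕ,
      Module.finrank k (LinearMap.ker ((u ^ p - 1) ^ j)) =
        b * min j (a + 1) + (p - b) * min j a ∧
      Module.finrank k (LinearMap.ker ((u ^ p - 1) ^ j)) = min (p * j) n := by
  -- n ≥ 1, V nontrivial
  have hn1 : 1 ≤ n := by
    by_contra h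
    have : Subsingleton V := by
      rw [← Module.finrank_zero_iff (R := k)]; omega
    exact hreg (Subsingleton.elim _ _)
  have : Nontrivial V := by
    apply Module.nontrivial_of_finrank_pos (R := k); omega
  haveI : NeZero p := ⟨hp.ne'⟩
  have hprime : Fact p.Prime := ⟨(CharP.char_is_prime_of_pos k p).out⟩
  have : CharP (Module.End k V) p := charP_of_injective_algebraMap' k (A := Module.End k V) p
  have hpow : u ^ p - 1 = (u - 1) ^ p := by
    rw [sub_pow_char_of_commute p (Commute.one_right u), one_pow]
  intro j
  have key := aux_dim hn (u - 1) hu hreg (p * j)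
  have hker : LinearMap.ker ((u ^ p - 1) ^ j) = LinearMap.ker ((u - 1) ^ (p * j)) := by
    rw [hpow, ← pow_mul]
  rw [hker, key]
  constructor
  · rcases le_or_gt j a with h | h
    · rw [min_eq_left h, min_eq_left (by omega : j ≤ a + 1), min_eq_left]
      · have : b * j + (p - b) * j = p * j := by
          rw [← Nat.add_mul]; congr 1; omega
        omega
      · calc p * j ≤ p * a := Nat.mul_le_mul_left p h
        _ = a * p := mul_comm p a
        _ ≤ a * p + b := Nat.le_add_right _ _
        _ = n := hnab.symm
    · rw [min_eq_right (by omega : a + 1 ≤ j), min_eq_right h.le, min_eq_right]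
      · have hba : b * a ≤ p * a := Nat.mul_le_mul_right a hb.le
        have h2 : b * (a + 1) + (p - b) * a = p * a + b := by
          rw [Nat.mul_add, Nat.sub_mul, mul_one]
          omega
        have h3 : p * a = a * p := mul_comm p a
        omega
      · calc n = a * p + b := hnab
        _ ≤ a * p + p := by omega
        _ = p * (a + 1) := by ring
        _ ≤ p * j := Nat.mul_le_mul_left p h
  · rfl
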